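/- arXiv:math/0702838 — 5 statements merged into one kernel-verified Lean document; each statement's English description precedes it below -/
import Mathlib

section
/- Let B be a DG algebra, I a nilpotent DG ideal of B, and α, β ∈ MC(I). If g ∈ 1 + I^0 satisfies g·α = β (gauge action), then for any h ∈ I^{-1}, the element g' = g + d(h) + βh + hα also satisfies g'·α = β. -/
/-- Let `B` be a DG algebra, `I` a nilpotent DG ideal of `B`, and
`α, β ∈ MC(I)`.  If `g ∈ 1 + I⁰` satisfies `g · α = β` (gauge action), then for any
`h ∈ I⁻¹`, the element `g' = g + d h + β h + h α` also satisfies `g' · α = β`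
(and again `g' ∈ 1 + I⁰`).

For `g` invertible, the gauge condition `g α g⁻¹ + g d(g⁻¹) = β` is equivalent to
the inverse-free equation `d g = g α - β g`, which is how it is encoded here both
in the hypothesis on `g = 1 + u` and in the conclusion on `g'`. -/
theorem statement_3
    (k : Type) [Field k] (B : Type) [Ring B] [Algebra k B]
    (𝒜 : ℤ → Submodule k B) (d : B →ₗ[k] B)
    (hone : (1 : B) ∈ 𝒜 0)
    (hmul : ∀ i j : ℤ, ∀ a ∈ 𝒜 i, ∀ b ∈ 𝒜 j, a * b ∈ 𝒜 (i + j))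
    (hd_deg : ∀ i : ℤ, ∀ a ∈ 𝒜 i, d a ∈ 𝒜 (i + 1))
    (hd_sq : ∀ a : B, d (d a) = 0)
    (hd_one : d (1 : B) = 0)
    (hleib : ∀ i : ℤ, ∀ a ∈ 𝒜 i, ∀ b : B,
      d (a * b) = d a * b + ((-1 : k) ^ i) • (a * d b))
    (I : Ideal B)
    (hIright : ∀ a ∈ I, ∀ r : B, a * r ∈ I)
    (hId : ∀ a ∈ I, d a ∈ I)
    (hInil : ∃ n : ℕ, ∀ l : List B, (∀ x ∈ l, x ∈ I) → l.length = n + 1 → l.prod = 0)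
    -- α, β ∈ MC(I):
    (α β : B)
    (hαI : α ∈ I) (hα1 : α ∈ 𝒜 1) (hαMC : d α + α * α = 0)
    (hβI : β ∈ I) (hβ1 : β ∈ 𝒜 1) (hβMC : d β + β * β = 0)
    -- g = 1 + u ∈ 1 + I⁰ with g · α = β:
    (u : B) (huI : u ∈ I) (hu0 : u ∈ 𝒜 0)
    (hgauge : d (1 + u) = (1 + u) * α - β * (1 + u))
    -- h ∈ I⁻¹:
    (h : B) (hhI : h ∈ I) (hh : h ∈ 𝒜 (-1)) :
    d ((1 + u) + d h + β * h + h * α) =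
        ((1 + u) + d h + β * h + h * α) * α -
          β * ((1 + u) + d h + β * h + h * α) ∧
      ((1 + u) + d h + β * h + h * α) - 1 ∈ I ∧
      ((1 + u) + d h + β * h + h * α) - 1 ∈ 𝒜 0 := by
  have hdα : d α = -(α * α) := eq_neg_of_add_eq_zero_left hαMC
  have hdβ : d β = -(β * β) := eq_neg_of_add_eq_zero_left hβMC
  have e1 : d (β * h) = d β * h + ((-1 : k) ^ (1 : ℤ)) • (β * d h) := hleib 1 β hβ1 h
  have e2 : d (h * α) = d h * α + ((-1 : k) ^ (-1 : ℤ)) • (h * d α) := hleib (-1) h hh α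
  have hz1 : ((-1 : k) ^ (1 : ℤ)) = -1 := by norm_num
  have hz2 : ((-1 : k) ^ (-1 : ℤ)) = -1 := by norm_num
  rw [hz1] at e1
  rw [hz2] at e2
  refine ⟨?_, ?_, ?_⟩
  · rw [map_add, map_add, map_add, hgauge, hd_sq, e1, e2, hdα, hdβ]
    simp only [neg_smul, one_smul]
    noncomm_ring
  · have : ((1 + u) + d h + β * h + h * α) - 1 = u + d h + β * h + h * α := by noncomm_ring
    rw [this]
    exact I.add_mem (I.add_mem (I.add_mem huI (hId h hhI)) (I.mul_mem_left β hhI))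
      (hIright h hhI α)
  · have : ((1 + u) + d h + β * h + h * α) - 1 = u + d h + β * h + h * α := by noncomm_ring
    rw [this]
    have h1 : d h ∈ 𝒜 0 := by simpa using hd_deg (-1) h hh
    have h2 : β * h ∈ 𝒜 0 := by simpa using hmul 1 (-1) β hβ1 h hh
    have h3 : h * α ∈ 𝒜 0 := by simpa using hmul (-1) 1 h hh α hα1
    exact add_mem (add_mem (add_mem hu0 h1) h2) h3
end

section
/- In the setting of obstruction theory: with B a DG algebra, R artinian with m^{n+1}=0, I = m^n, if α̃, α̃' ∈ (B ⊗ m)^1 are two lifts of the same α ∈ MC(B ⊗ m/I), then Q(α̃') − Q(α̃) = d(α̃' − α̃). Hence the cohomology class o₂(α) := [Q(α̃)] ∈ H²(B ⊗ I) is independent of the choice of lift. -/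
/-- (Independence of the obstruction class of the lift.)
Setting as in the obstruction theory: `B` a DG algebra, `R` artinian with
`m^(n+1) = 0`, `I = mⁿ`.  If `α̃, α̃' ∈ (B ⊗ m)¹` are two lifts of the same
`α ∈ MC(B ⊗ m/I)`, then `Q(α̃') − Q(α̃) = d(α̃' − α̃)`.  Hence the cohomology class
`o₂(α) = [Q(α̃)] ∈ H²(B ⊗ I)` is independent of the choice of lift.

Encoding: `T = B ⊗ R` is a DG algebra with grading `𝒜` and differential `d`;
`N = B ⊗ m` and `J = B ⊗ I` are two-sided DG ideals with `J ≤ N` and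
`J·N = N·J = 0` (since `I·m = m·I = 0`); `Q x = d x + x * x`.  "Two lifts of the
same Maurer–Cartan element of the quotient by `J`" means `α̃' − α̃ ∈ J` together
with `Q(α̃) ∈ J`. -/
theorem statement_5
    (k : Type) [Field k] (T : Type) [Ring T] [Algebra k T]
    (𝒜 : ℤ → Submodule k T) (d : T →ₗ[k] T)
    (hone : (1 : T) ∈ 𝒜 0)
    (hmul : ∀ i j : ℤ, ∀ a ∈ 𝒜 i, ∀ b ∈ 𝒜 j, a * b ∈ 𝒜 (i + j))
    (hd_deg : ∀ i : ℤ, ∀ a ∈ 𝒜 i, d a ∈ 𝒜 (i + 1))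
    (hd_sq : ∀ a : T, d (d a) = 0)
    (hd_one : d (1 : T) = 0)
    (hleib : ∀ i : ℤ, ∀ a ∈ 𝒜 i, ∀ b : T,
      d (a * b) = d a * b + ((-1 : k) ^ i) • (a * d b))
    (N J : Submodule k T)
    (hJN : J ≤ N)
    (hNleft : ∀ a ∈ N, ∀ r : T, r * a ∈ N) (hNright : ∀ a ∈ N, ∀ r : T, a * r ∈ N)
    (hJleft : ∀ a ∈ J, ∀ r : T, r * a ∈ J) (hJright : ∀ a ∈ J, ∀ r : T, a * r ∈ J)
    (hNd : ∀ a ∈ N, d a ∈ N) (hJd : ∀ a ∈ J, d a ∈ J)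
    (hJNzero : ∀ x ∈ J, ∀ y ∈ N, x * y = 0 ∧ y * x = 0)
    -- the two lifts:
    (α' α'' : T)
    (hαN : α' ∈ N) (hα1 : α' ∈ 𝒜 1)
    (hα'N : α'' ∈ N) (hα'1 : α'' ∈ 𝒜 1)
    (hsame : α'' - α' ∈ J)
    (hlift : d α' + α' * α' ∈ J) :
    (d α'' + α'' * α'') - (d α' + α' * α') = d (α'' - α') := by
  have h1 : (α'' - α') * α'' = 0 := ((hJNzero _ hsame _ hα'N).1)
  have h2 : α' * (α'' - α') = 0 := ((hJNzero _ hsame _ hαN).2)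
  have e1 : α'' * α'' = α' * α'' := by
    rw [← sub_eq_zero, ← sub_mul]; exact h1
  have e2 : α' * α'' = α' * α' := by
    rw [← sub_eq_zero, ← mul_sub]; exact h2
  rw [map_sub, e1, e2]; abel
end

section
/- Obstruction vanishing implies lifting: let B be a DG algebra, R artinian with m^{n+1} = 0, I = m^n. Let α ∈ MC(B ⊗ m/I) and α̃ ∈ (B ⊗ m)^1 a lift. If Q(α̃) = dτ for some τ ∈ (B ⊗ I)^1, then α̃' := α̃ − τ satisfies Q(α̃') = 0, i.e. α̃' ∈ MC(B ⊗ m) lifts α. -/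
/-- (Vanishing of the obstruction implies lifting.)
Let `B` be a DG algebra, `R` artinian with `m^(n+1) = 0`, `I = mⁿ`.  Let
`α ∈ MC(B ⊗ m/I)` and `α̃ ∈ (B ⊗ m)¹` a lift.  If `Q(α̃) = d τ` for some
`τ ∈ (B ⊗ I)¹`, then `α̃' := α̃ − τ` satisfies `Q(α̃') = 0`, i.e.
`α̃' ∈ MC(B ⊗ m)` lifts `α`.

Encoding: `T = B ⊗ R` is a DG algebra with grading `𝒜` and differential `d`;
`N = B ⊗ m` and `J = B ⊗ I` are two-sided DG ideals with `J ≤ N` and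
`J·N = N·J = 0`; `Q x = d x + x * x`; "`α̃ − τ` lifts `α`" is expressed by
`(α̃ − τ) − α̃ ∈ J` (same class mod `J`). -/
theorem statement_6
    (k : Type) [Field k] (T : Type) [Ring T] [Algebra k T]
    (𝒜 : ℤ → Submodule k T) (d : T →ₗ[k] T)
    (hone : (1 : T) ∈ 𝒜 0)
    (hmul : ∀ i j : ℤ, ∀ a ∈ 𝒜 i, ∀ b ∈ 𝒜 j, a * b ∈ 𝒜 (i + j))
    (hd_deg : ∀ i : ℤ, ∀ a ∈ 𝒜 i, d a ∈ 𝒜 (i + 1))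
    (hd_sq : ∀ a : T, d (d a) = 0)
    (hd_one : d (1 : T) = 0)
    (hleib : ∀ i : ℤ, ∀ a ∈ 𝒜 i, ∀ b : T,
      d (a * b) = d a * b + ((-1 : k) ^ i) • (a * d b))
    (N J : Submodule k T)
    (hJN : J ≤ N)
    (hNleft : ∀ a ∈ N, ∀ r : T, r * a ∈ N) (hNright : ∀ a ∈ N, ∀ r : T, a * r ∈ N)
    (hJleft : ∀ a ∈ J, ∀ r : T, r * a ∈ J) (hJright : ∀ a ∈ J, ∀ r : T, a * r ∈ J)
    (hNd : ∀ a ∈ N, d a ∈ N) (hJd : ∀ a ∈ J, d a ∈ J)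
    (hJNzero : ∀ x ∈ J, ∀ y ∈ N, x * y = 0 ∧ y * x = 0)
    -- the lift and the primitive of the obstruction cocycle:
    (α' τ : T) (hαN : α' ∈ N) (hα1 : α' ∈ 𝒜 1)
    (hτJ : τ ∈ J) (hτ1 : τ ∈ 𝒜 1)
    (hQ : d α' + α' * α' = d τ) :
    d (α' - τ) + (α' - τ) * (α' - τ) = 0 ∧
      α' - τ ∈ N ∧ α' - τ ∈ 𝒜 1 ∧ (α' - τ) - α' ∈ J := by
  have h1 : α' * τ = 0 := (hJNzero τ hτJ α' hαN).2
  have h2 : τ * α' = 0 := (hJNzero τ hτJ α' hαN).1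
  have h3 : τ * τ = 0 := (hJNzero τ hτJ τ (hJN hτJ)).1
  refine ⟨?_, ?_, ?_, ?_⟩
  · have : d (α' - τ) = d α' - d τ := by rw [map_sub]
    rw [this, sub_mul, mul_sub, mul_sub, h1, h2, h3]
    simp only [sub_zero, zero_sub, neg_zero]
    have e : d α' - d τ + α' * α' = (d α' + α' * α') - d τ := by abel
    rw [e, hQ, sub_self]
  · exact N.sub_mem hαN (hJN hτJ)
  · exact (𝒜 1).sub_mem hα1 hτ1
  · simpa using J.neg_mem hτJ
end

section
/- Torsor structure on lifts: let B be a DG algebra, R artinian with m^{n+1} = 0, I = m^n, and ξ ∈ MC(B ⊗ m/I). If α ∈ MC(B ⊗ m) lifts ξ and η ∈ (B ⊗ I)^1 is a cocycle (dη = 0), then α + η ∈ MC(B ⊗ m) also lifts ξ. Conversely, if α, β ∈ MC(B ⊗ m) both lift ξ, then α − β ∈ (B ⊗ I)^1 satisfies d(α − β) = 0. Thus Z¹(B ⊗ I) acts simply transitively on the set of lifts of ξ. -/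
/-- (Torsor structure on the set of lifts.)
Let `B` be a DG algebra, `R` artinian with `m^(n+1) = 0`, `I = mⁿ`, and
`ξ ∈ MC(B ⊗ m/I)`.  If `α ∈ MC(B ⊗ m)` lifts `ξ` and `η ∈ (B ⊗ I)¹` is a cocycle,
then `α + η ∈ MC(B ⊗ m)` also lifts `ξ`.  Conversely, if `α, β ∈ MC(B ⊗ m)` both
lift `ξ`, then `α − β ∈ (B ⊗ I)¹` satisfies `d(α − β) = 0`.  Thus `Z¹(B ⊗ I)` acts
simply transitively on the set of lifts of `ξ`.

Encoding: `T = B ⊗ R` is a DG algebra with grading `𝒜` and differential `d`;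
`N = B ⊗ m` and `J = B ⊗ I` are two-sided DG ideals with `J ≤ N` and
`J·N = N·J = 0`.  "Both lift `ξ`" is expressed by `α − β ∈ J`. -/
theorem statement_7
    (k : Type) [Field k] (T : Type) [Ring T] [Algebra k T]
    (𝒜 : ℤ → Submodule k T) (d : T →ₗ[k] T)
    (hone : (1 : T) ∈ 𝒜 0)
    (hmul : ∀ i j : ℤ, ∀ a ∈ 𝒜 i, ∀ b ∈ 𝒜 j, a * b ∈ 𝒜 (i + j))
    (hd_deg : ∀ i : ℤ, ∀ a ∈ 𝒜 i, d a ∈ 𝒜 (i + 1))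
    (hd_sq : ∀ a : T, d (d a) = 0)
    (hd_one : d (1 : T) = 0)
    (hleib : ∀ i : ℤ, ∀ a ∈ 𝒜 i, ∀ b : T,
      d (a * b) = d a * b + ((-1 : k) ^ i) • (a * d b))
    (N J : Submodule k T)
    (hJN : J ≤ N)
    (hNleft : ∀ a ∈ N, ∀ r : T, r * a ∈ N) (hNright : ∀ a ∈ N, ∀ r : T, a * r ∈ N)
    (hJleft : ∀ a ∈ J, ∀ r : T, r * a ∈ J) (hJright : ∀ a ∈ J, ∀ r : T, a * r ∈ J)
    (hNd : ∀ a ∈ N, d a ∈ N) (hJd : ∀ a ∈ J, d a ∈ J)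
    (hJNzero : ∀ x ∈ J, ∀ y ∈ N, x * y = 0 ∧ y * x = 0) :
    -- action of Z¹(B ⊗ I) on the set of lifts:
    (∀ α η : T, α ∈ N → α ∈ 𝒜 1 → d α + α * α = 0 →
        η ∈ J → η ∈ 𝒜 1 → d η = 0 →
        (d (α + η) + (α + η) * (α + η) = 0 ∧ (α + η) ∈ N ∧ (α + η) ∈ 𝒜 1 ∧
          (α + η) - α ∈ J)) ∧
    -- transitivity: the difference of two lifts is a cocycle in (B ⊗ I)¹:
    (∀ α β : T, α ∈ N → α ∈ 𝒜 1 → d α + α * α = 0 →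
        β ∈ N → β ∈ 𝒜 1 → d β + β * β = 0 →
        α - β ∈ J → d (α - β) = 0) := by
  constructor
  · intro α η hαN hα1 hαMC hηJ hη1 hdη
    have hηα : η * α = 0 := (hJNzero η hηJ α hαN).1
    have hαη : α * η = 0 := (hJNzero η hηJ α hαN).2
    have hηη : η * η = 0 := (hJNzero η hηJ η (hJN hηJ)).1
    refine ⟨?_, N.add_mem hαN (hJN hηJ), (𝒜 1).add_mem hα1 hη1, ?_⟩
    · have : (α + η) * (α + η) = α * α := by
        rw [mul_add, add_mul, add_mul, hηα, hαη, hηη]; simp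
      rw [map_add, this, hdη, add_zero, hαMC]
    · simpa using hηJ
  · intro α β hαN hα1 hαMC hβN hβ1 hβMC hJ'
    have h1 : (α - β) * β = 0 := (hJNzero _ hJ' β hβN).1
    have h2 : α * (α - β) = 0 := (hJNzero _ hJ' α hαN).2
    have hsq : α * α = β * β := by
      have e1 : α * β = β * β := by
        have h := sub_mul α β β; rw [h1] at h; exact sub_eq_zero.mp h.symm
      have e2 : α * α = α * β := by
        have h := mul_sub α α β; rw [h2] at h; exact sub_eq_zero.mp h.symm
      rw [e2, e1]
    rw [map_sub]
    have : d α = d β := by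
      have h := hαMC; rw [hsq] at h
      rw [eq_neg_of_add_eq_zero_left h, eq_neg_of_add_eq_zero_left hβMC]
    rw [this, sub_self]
end

section
/- Nakayama-type rigidity: let R be an artinian DG algebra with maximal nilpotent DG ideal m, A a DG category, and S, T DG A_R^op-modules whose underlying graded modules are of the form (K ⊗ R)^gr (graded R-free). If f : S → T is a closed degree-zero morphism such that i*f := f ⊗_R k is an isomorphism, then f is an isomorphism. -/
set_option synthInstance.maxHeartbeats 400000
set_option maxHeartbeats 1000000

namespace stmt16

variable (k : Type) [Field k]
variable (A : Type) [Ring A] [Algebra k A] (𝒜 : ℤ → Submodule k A) (dA : A →ₗ[k] A)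
variable (R : Type) [Ring R] [Algebra k R] (𝒢 : ℤ → Submodule k R) (dR : R →ₗ[k] R)

/-- A DG `𝒜_R^{op}`-module: a graded complex with commuting right actions of the
DG algebra `A` (playing the role of the DG category `𝒜`) and of the artinian DG
algebra `R`, i.e. a right DG module over `A ⊗ R`. -/
structure ARMod where
  carrier : Type
  [acg : AddCommGroup carrier]
  [kmod : Module k carrier]
  actA : carrier →ₗ[k] A →ₗ[k] carrier
  actA_one : ∀ m, actA m 1 = m
  actA_mul : ∀ m a a', actA (actA m a) a' = actA m (a * a')
  actR : carrier →ₗ[k] R →ₗ[k] carrier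
  actR_one : ∀ m, actR m 1 = m
  actR_mul : ∀ m r r', actR (actR m r) r' = actR m (r * r')
  comm : ∀ i j : ℤ, ∀ a ∈ 𝒜 i, ∀ r ∈ 𝒢 j, ∀ m,
    actA (actR m r) a = ((-1 : k) ^ (i * j)) • actR (actA m a) r
  gr : ℤ → Submodule k carrier
  gr_actA : ∀ i j : ℤ, ∀ m ∈ gr i, ∀ a ∈ 𝒜 j, actA m a ∈ gr (i + j)
  gr_actR : ∀ i j : ℤ, ∀ m ∈ gr i, ∀ r ∈ 𝒢 j, actR m r ∈ gr (i + j)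
  diff : carrier →ₗ[k] carrier
  diff_deg : ∀ i : ℤ, ∀ m ∈ gr i, diff m ∈ gr (i + 1)
  diff_sq : ∀ m, diff (diff m) = 0
  leibA : ∀ i : ℤ, ∀ m ∈ gr i, ∀ a,
    diff (actA m a) = actA (diff m) a + ((-1 : k) ^ i) • actA m (dA a)
  leibR : ∀ i : ℤ, ∀ m ∈ gr i, ∀ r,
    diff (actR m r) = actR (diff m) r + ((-1 : k) ^ i) • actR m (dR r)

attribute [instance] ARMod.acg ARMod.kmod

variable {k A 𝒜 dA R 𝒢 dR}

/-- `X` is graded `R`-free: its underlying graded module is `(K ⊗ R)^{gr}` for a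
graded module `K`, i.e. `X` admits a homogeneous basis over `R^{gr}`. -/
def GradedRFree (X : ARMod k A 𝒜 dA R 𝒢 dR) : Prop :=
  ∃ (ι : Type) (κ : ι → ℤ) (e : ι → X.carrier),
    (∀ i, e i ∈ X.gr (κ i)) ∧
    Function.Bijective
      (fun l : ι →₀ R => l.sum fun i r => X.actR (e i) r) ∧
    ∀ n : ℤ, ∀ x ∈ X.gr n, ∃ l : ι →₀ R,
      (∀ i, l i ∈ 𝒢 (n - κ i)) ∧ x = l.sum fun i r => X.actR (e i) r

/-- The submodule `X·m` of a module `X`, for `m ⊆ R`. -/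
def smulIdeal (X : ARMod k A 𝒜 dA R 𝒢 dR) (m : Ideal R) :
    Submodule k X.carrier :=
  Submodule.span k {x | ∃ s : X.carrier, ∃ r ∈ m, x = X.actR s r}

section auxiliary

lemma surj_aux (m : Ideal R)
    (hmnil : ∃ n : ℕ, ∀ l : List R, (∀ x ∈ l, x ∈ m) → l.length = n + 1 → l.prod = 0)
    (S T : ARMod k A 𝒜 dA R 𝒢 dR)
    (f : S.carrier →ₗ[k] T.carrier)
    (hfR : ∀ s r, f (S.actR s r) = T.actR (f s) r)
    (hle : smulIdeal S m ≤ Submodule.comap f (smulIdeal T m))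
    (hsurj : Function.Surjective
      (Submodule.mapQ (smulIdeal S m) (smulIdeal T m) f hle)) :
    Function.Surjective f := by
  obtain ⟨n, hn⟩ := hmnil
  set M : ℕ → Submodule k T.carrier := fun j =>
    Submodule.span k {x | ∃ t : T.carrier, ∃ l : List R,
      (∀ r ∈ l, r ∈ m) ∧ l.length = j ∧ x = T.actR t l.prod} with hM
  have key0 : ∀ t : T.carrier, ∃ s, t - f s ∈ smulIdeal T m := by
    intro t
    obtain ⟨sq, hsq⟩ := hsurj (Submodule.Quotient.mk t)
    obtain ⟨s, rfl⟩ := Submodule.Quotient.mk_surjective _ sq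
    refine ⟨s, ?_⟩
    rw [Submodule.mapQ_apply, Submodule.Quotient.eq] at hsq
    simpa using neg_mem hsq
  have hactgen : ∀ (l : List R), (∀ r ∈ l, r ∈ m) →
      ∀ u ∈ smulIdeal T m, T.actR u l.prod ∈ M (l.length + 1) := by
    intro l hl u hu
    induction hu using Submodule.span_induction with
    | mem x hx =>
      obtain ⟨t', r', hr', rfl⟩ := hx
      rw [T.actR_mul]
      exact Submodule.subset_span ⟨t', r' :: l, by
        intro r hr
        rcases List.mem_cons.mp hr with h | h
        · exact h ▸ hr'
        · exact hl r h, by simp, by simp⟩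
    | zero => simp
    | add x y _ _ hx hy => rw [map_add, LinearMap.add_apply]; exact add_mem hx hy
    | smul c x _ hx =>
      rw [map_smul, LinearMap.smul_apply]; exact Submodule.smul_mem _ c hx
  have step : ∀ j : ℕ, M j ≤ LinearMap.range f ⊔ M (j + 1) := by
    intro j
    rw [hM]
    refine Submodule.span_le.mpr ?_
    rintro x ⟨t, l, hl, hlen, rfl⟩
    obtain ⟨s, hs⟩ := key0 t
    have hdec : T.actR t l.prod
        = f (S.actR s l.prod) + T.actR (t - f s) l.prod := by
      rw [hfR]
      have : t = f s + (t - f s) := by abel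
      rw [this]
      simp [map_add]
    rw [hdec]
    refine add_mem (Submodule.mem_sup_left ⟨S.actR s l.prod, rfl⟩)
      (Submodule.mem_sup_right ?_)
    have := hactgen l hl (t - f s) hs
    rwa [hlen] at this
  have allin : ∀ j : ℕ, ∀ t : T.carrier, t ∈ LinearMap.range f ⊔ M j := by
    intro j
    induction j with
    | zero =>
      intro t
      exact Submodule.mem_sup_right (Submodule.subset_span
        ⟨t, [], by simp, by simp, by simp [T.actR_one]⟩)
    | succ j ih =>
      intro t
      exact (sup_le le_sup_left (step j)) (ih t)
  have Mzero : M (n + 1) = ⊥ := by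
    rw [hM]
    refine le_bot_iff.mp (Submodule.span_le.mpr ?_)
    rintro x ⟨t, l, hl, hlen, rfl⟩
    have h0 : l.prod = 0 := hn l hl hlen
    simp [h0]
  intro t
  have ht := allin (n + 1) t
  rw [Mzero, sup_bot_eq] at ht
  exact ht

end auxiliary

/-- (Nakayama-type rigidity.)  Let `R` be an artinian DG
algebra with nilpotent maximal DG ideal `m`, `A` a DG algebra (playing the role
of the DG category `𝒜`), and `S, T` DG `A_R^{op}`-modules which are graded
`R`-free.  If `f : S → T` is a closed degree-zero morphism of DG
`A_R^{op}`-modules such that `i^* f = f ⊗_R k` (the induced map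
`S/S·m → T/T·m`) is an isomorphism, then `f` is an isomorphism. -/

theorem statement_16
    -- DG algebra axioms for R:
    (honeR : (1 : R) ∈ 𝒢 0)
    (hmulR : ∀ i j : ℤ, ∀ a ∈ 𝒢 i, ∀ b ∈ 𝒢 j, a * b ∈ 𝒢 (i + j))
    (hdR_deg : ∀ i : ℤ, ∀ a ∈ 𝒢 i, dR a ∈ 𝒢 (i + 1))
    (hdR_sq : ∀ a : R, dR (dR a) = 0) (hdR_one : dR (1 : R) = 0)
    (hdR_leib : ∀ i : ℤ, ∀ a ∈ 𝒢 i, ∀ b : R,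
      dR (a * b) = dR a * b + ((-1 : k) ^ i) • (a * dR b))
    -- R is finite dimensional and artinian with maximal DG ideal m:
    [FiniteDimensional k R]
    (m : Ideal R)
    (hmright : ∀ a ∈ m, ∀ r : R, a * r ∈ m)
    (hmd : ∀ a ∈ m, dR a ∈ m)
    (hmnil : ∃ n : ℕ, ∀ l : List R, (∀ x ∈ l, x ∈ m) → l.length = n + 1 → l.prod = 0)
    (hcodim : ∀ r : R, ∃ c : k, r - algebraMap k R c ∈ m)
    (hproper : (1 : R) ∉ m)
    -- DG algebra axioms for A:
    (honeA : (1 : A) ∈ 𝒜 0)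
    (hmulA : ∀ i j : ℤ, ∀ a ∈ 𝒜 i, ∀ b ∈ 𝒜 j, a * b ∈ 𝒜 (i + j))
    (hdA_deg : ∀ i : ℤ, ∀ a ∈ 𝒜 i, dA a ∈ 𝒜 (i + 1))
    (hdA_sq : ∀ a : A, dA (dA a) = 0) (hdA_one : dA (1 : A) = 0)
    (hdA_leib : ∀ i : ℤ, ∀ a ∈ 𝒜 i, ∀ b : A,
      dA (a * b) = dA a * b + ((-1 : k) ^ i) • (a * dA b))
    -- the graded R-free modules S and T:
    (S T : ARMod k A 𝒜 dA R 𝒢 dR)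
    (hSfree : GradedRFree S) (hTfree : GradedRFree T)
    -- the closed degree-zero morphism f:
    (f : S.carrier →ₗ[k] T.carrier)
    (hfA : ∀ s a, f (S.actA s a) = T.actA (f s) a)
    (hfR : ∀ s r, f (S.actR s r) = T.actR (f s) r)
    (hfgr : ∀ i : ℤ, ∀ s ∈ S.gr i, f s ∈ T.gr i)
    (hfd : ∀ s, f (S.diff s) = T.diff (f s))
    -- i^* f is an isomorphism:
    (hle : smulIdeal S m ≤ Submodule.comap f (smulIdeal T m))
    (hbij : Function.Bijective
      (Submodule.mapQ (smulIdeal S m) (smulIdeal T m) f hle)) :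
    Function.Bijective f := by
  -- Step 1: f is surjective.
  have hfsurj : Function.Surjective f := surj_aux m hmnil S T f hfR hle hbij.2
  -- Step 2: build an R-equivariant section h of f, using freeness of T.
  obtain ⟨ι, κ, e, hegr, hPhiBij, -⟩ := hTfree
  set Φ : (ι →₀ R) →ₗ[k] T.carrier := Finsupp.lsum k (fun i => T.actR (e i)) with hΦ
  have hΦapply : ∀ l : ι →₀ R, Φ l = l.sum fun i r => T.actR (e i) r := fun l => rfl
  have hΦbij : Function.Bijective Φ := hPhiBij
  set eT : (ι →₀ R) ≃ₗ[k] T.carrier := LinearEquiv.ofBijective Φ hΦbij with heT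
  choose s hs using fun i => hfsurj (e i)
  set ψ : (ι →₀ R) →ₗ[k] S.carrier := Finsupp.lsum k (fun i => S.actR (s i)) with hψ
  set h : T.carrier →ₗ[k] S.carrier := ψ ∘ₗ (eT.symm : T.carrier →ₗ[k] (ι →₀ R)) with hh
  have hfh : ∀ t, f (h t) = t := by
    intro t
    have : f (ψ (eT.symm t)) = Φ (eT.symm t) := by
      rw [hΦapply]
      rw [show ψ (eT.symm t) = (eT.symm t).sum fun i r => S.actR (s i) r from rfl]
      rw [map_finsuppSum]
      refine Finsupp.sum_congr fun i _ => ?_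
      rw [hfR, hs]
    have h2 : Φ (eT.symm t) = eT (eT.symm t) := rfl
    simpa [h2, hh] using this
  have hmulrange : ∀ (X : ARMod k A 𝒜 dA R 𝒢 dR) (v : ι → X.carrier)
      (l : ι →₀ R) (r : R),
      ((Finsupp.lsum k (fun i => X.actR (v i)) : (ι →₀ R) →ₗ[k] X.carrier)
        (Finsupp.mapRange (· * r) (zero_mul r) l))
      = X.actR ((Finsupp.lsum k (fun i => X.actR (v i)) : (ι →₀ R) →ₗ[k] X.carrier) l) r := by
    intro X v l r
    have h1 : ((Finsupp.lsum k (fun i => X.actR (v i)) : (ι →₀ R) →ₗ[k] X.carrier)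
        (Finsupp.mapRange (· * r) (zero_mul r) l))
        = l.sum fun i x => X.actR (v i) (x * r) := by
      rw [show ∀ g : ι →₀ R, (Finsupp.lsum k (fun i => X.actR (v i)) :
          (ι →₀ R) →ₗ[k] X.carrier) g = g.sum fun i x => X.actR (v i) x
        from fun g => rfl]
      exact Finsupp.sum_mapRange_index (by simp)
    rw [h1]
    have h2 : (l.sum fun i x => X.actR (v i) (x * r))
        = l.sum fun i x => (X.actR.flip r) (X.actR (v i) x) := by
      refine Finsupp.sum_congr fun i _ => ?_
      simp [LinearMap.flip_apply, X.actR_mul]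
    rw [h2, ← map_finsuppSum (X.actR.flip r)]
    rfl
  have hsymm_act : ∀ (t : T.carrier) (r : R),
      eT.symm (T.actR t r) = Finsupp.mapRange (· * r) (zero_mul r) (eT.symm t) := by
    intro t r
    apply eT.injective
    rw [eT.apply_symm_apply]
    have h1 : eT (Finsupp.mapRange (· * r) (zero_mul r) (eT.symm t))
        = Φ (Finsupp.mapRange (· * r) (zero_mul r) (eT.symm t)) := rfl
    rw [h1, hmulrange T e]
    have h2 : Φ (eT.symm t) = eT (eT.symm t) := rfl
    rw [show (Finsupp.lsum k fun i => T.actR (e i) :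
      (ι →₀ R) →ₗ[k] T.carrier) (eT.symm t) = Φ (eT.symm t) from rfl, h2,
      eT.apply_symm_apply]
  have hhR : ∀ t r, h (T.actR t r) = S.actR (h t) r := by
    intro t r
    have : h (T.actR t r) = ψ (Finsupp.mapRange (· * r) (zero_mul r) (eT.symm t)) := by
      rw [hh]
      simp only [LinearMap.coe_comp, Function.comp_apply, LinearEquiv.coe_coe]
      rw [hsymm_act]
    rw [this, hψ, hmulrange S s]
    rfl
  -- Step 3: h maps T·m into S·m.
  have hleh : smulIdeal T m ≤ Submodule.comap h (smulIdeal S m) := by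
    refine Submodule.span_le.mpr ?_
    rintro x ⟨t, r, hr, rfl⟩
    exact Submodule.subset_span ⟨h t, r, hr, (hhR t r)⟩
  -- Step 4: the induced map of h on quotients is surjective.
  have hhQsurj : Function.Surjective
      (Submodule.mapQ (smulIdeal T m) (smulIdeal S m) h hleh) := by
    intro sq
    obtain ⟨x, rfl⟩ := Submodule.Quotient.mk_surjective _ sq
    refine ⟨Submodule.Quotient.mk (f x), ?_⟩
    rw [Submodule.mapQ_apply]
    have hker : h (f x) - x ∈ smulIdeal S m := by
      have hfz : Submodule.mapQ (smulIdeal S m) (smulIdeal T m) f hle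
          (Submodule.Quotient.mk (h (f x) - x))
          = Submodule.mapQ (smulIdeal S m) (smulIdeal T m) f hle
          (Submodule.Quotient.mk (0 : S.carrier)) := by
        rw [Submodule.mapQ_apply, Submodule.mapQ_apply]
        congr 1
        rw [map_sub, hfh, map_zero, sub_self]
      have := hbij.1 hfz
      rwa [Submodule.Quotient.eq, sub_zero] at this
    exact (Submodule.Quotient.eq _).mpr hker
  -- Step 5: h is surjective, hence f is injective.
  have hhsurj : Function.Surjective h := surj_aux m hmnil T S h hhR hleh hhQsurj
  refine ⟨?_, hfsurj⟩
  intro x₁ x₂ hx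
  obtain ⟨y₁, rfl⟩ := hhsurj x₁
  obtain ⟨y₂, rfl⟩ := hhsurj x₂
  rw [← hfh y₁, ← hfh y₂]
  rw [hx]


end stmt16
end
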